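/- Let M be a matroid of finite rank m, r ≥ 1, and let S be a finite sequence of non-loops in M colored by exactly m colors 1, …, m such that color 1 is used on at least r elements and each color 2, …, m is used on at least r-1 elements. Then there exist r pairwise disjoint rainbow subsequences S_1, …, S_r of S with cl(∅) ⊊ cl(S_1) ⊆ cl(S_2) ⊆ … ⊆ cl(S_r). -/

import Mathlib

open Set Matroid

namespace MatTverberg

variable {α : Type*} {M : Matroid α} {I X Y : Set α}

noncomputable def frk (M : Matroid α) (X : Set α) : ℕ := (M.exists_isBasis' X).choose.ncard

lemma basis'_ncard (h : M.IsBasis' I X) : I.ncard = frk M X := by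
  have h' := (M.exists_isBasis' X).choose_spec
  have h1 : (M ↾ X).IsBase I := Matroid.isBase_restrict_iff'.2 h
  have h2 : (M ↾ X).IsBase (M.exists_isBasis' X).choose := Matroid.isBase_restrict_iff'.2 h'
  exact h1.ncard_eq_ncard_of_isBase h2

lemma ncard_le_frk (hI : M.Indep I) (hIX : I ⊆ X) (hX : X.Finite) : I.ncard ≤ frk M X := by
  obtain ⟨J, hJ, hIJ⟩ := hI.subset_isBasis'_of_subset hIX
  rw [← basis'_ncard hJ]
  exact ncard_le_ncard hIJ (hX.subset hJ.subset)

lemma exists_frk_set (M : Matroid α) (X : Set α) :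
    ∃ I, I ⊆ X ∧ M.Indep I ∧ I.ncard = frk M X := by
  obtain ⟨I, hI⟩ := M.exists_isBasis' X
  exact ⟨I, hI.subset, hI.indep, basis'_ncard hI⟩

lemma frk_mono (h : X ⊆ Y) (hY : Y.Finite) : frk M X ≤ frk M Y := by
  obtain ⟨I, hIX, hI, hcard⟩ := exists_frk_set M X
  exact hcard ▸ ncard_le_frk hI (hIX.trans h) hY

lemma frk_le_ncard (X : Set α) (hX : X.Finite) : frk M X ≤ X.ncard := by
  obtain ⟨I, hIX, hI, hcard⟩ := exists_frk_set M X
  exact hcard ▸ ncard_le_ncard hIX hX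

lemma indep_frk_eq (hX : M.Indep X) : frk M X = X.ncard :=
  (basis'_ncard hX.isBasis_self.isBasis').symm

lemma subset_closure_of_frk_le (hI : M.Indep I) (hIX : I ⊆ X) (hX : X.Finite)
    (hXE : X ⊆ M.E) (hle : frk M X ≤ I.ncard) : X ⊆ M.closure I := by
  obtain ⟨J, hJ, hIJ⟩ := hI.subset_isBasis'_of_subset hIX
  have hJfin : J.Finite := hX.subset hJ.subset
  have hIJ' : I = J := by
    apply Set.eq_of_subset_of_ncard_le hIJ _ hJfin
    rw [basis'_ncard hJ]; exact hle
  subst hIJ'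
  have := hJ.closure_eq_closure
  rw [this]
  exact M.subset_closure X hXE

lemma frk_submod (X Y : Set α) (hX : X.Finite) (hY : Y.Finite) :
    frk M (X ∪ Y) + frk M (X ∩ Y) ≤ frk M X + frk M Y := by
  obtain ⟨I, hIi, hIind, hIcard⟩ := exists_frk_set M (X ∩ Y)
  obtain ⟨J, hJ, hIJ⟩ := hIind.subset_isBasis'_of_subset
    (hIi.trans (Set.inter_subset_left.trans Set.subset_union_left))
  have hJfin : J.Finite := (hX.union hY).subset hJ.subset
  have hJX : (J ∩ X).ncard ≤ frk M X :=
    ncard_le_frk (hJ.indep.subset inter_subset_left) inter_subset_right hX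
  have hJY : (J ∩ Y).ncard ≤ frk M Y :=
    ncard_le_frk (hJ.indep.subset inter_subset_left) inter_subset_right hY
  have hIJXY : I ⊆ J ∩ (X ∩ Y) := subset_inter hIJ hIi
  have hinter : frk M (X ∩ Y) ≤ (J ∩ (X ∩ Y)).ncard := by
    rw [← hIcard]
    exact ncard_le_ncard hIJXY (hJfin.inter_of_left _)
  have hsplit : (J ∩ X).ncard + (J ∩ Y).ncard = J.ncard + (J ∩ (X ∩ Y)).ncard := by
    rw [← ncard_union_add_ncard_inter _ _ (hJfin.inter_of_left _) (hJfin.inter_of_left _),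
      ← inter_union_distrib_left, ← inter_inter_distrib_left]
    congr 2
    rw [inter_eq_left]
    exact hJ.subset
  have hfull : frk M (X ∪ Y) = J.ncard := (basis'_ncard hJ).symm
  omega

lemma frk_le_base_ncard {B : Set α} (hB : M.IsBase B) (hBfin : B.Finite)
    (hXE : X ⊆ M.E) : frk M X ≤ B.ncard := by
  obtain ⟨I, hIX, hI, hcard⟩ := exists_frk_set M X
  obtain ⟨B', hB', hIB'⟩ := hI.exists_isBase_superset
  have hB'fin : B'.Finite := hB.finite_of_finite hBfin hB'
  rw [← hcard, ← hB'.ncard_eq_ncard_of_isBase hB]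
  exact ncard_le_ncard hIB' hB'fin

lemma singleton_indep {x : α} (hx : x ∈ M.E) (hx' : x ∉ M.closure ∅) : M.Indep {x} := by
  have h := (M.empty_indep.insert_indep_iff (e := x))
  rw [show insert x (∅ : Set α) = {x} by simp] at h
  rw [h]
  exact Or.inl ⟨hx, hx'⟩


section Colored

variable {ι : Type*} [Fintype ι] [DecidableEq ι] {m : ℕ}

lemma exists_lift (S : ι → α) (X : Finset ι) (F : Finset α) (hF : ↑F ⊆ S '' ↑X) :
    ∃ E : Finset ι, E ⊆ X ∧ Set.InjOn S ↑E ∧ S '' ↑E = ↑F ∧ E.card = F.card := by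
  classical
  induction F using Finset.induction_on with
  | empty => exact ⟨∅, by simp, by simp, by simp, by simp⟩
  | @insert a F haF ih =>
    obtain ⟨E, hEX, hinj, himg, hcard⟩ := ih (by
      refine Set.Subset.trans ?_ hF
      exact_mod_cast Finset.coe_subset.2 (Finset.subset_insert a F))
    obtain ⟨i, hiX, hia⟩ := hF (by simp : a ∈ (↑(insert a F) : Set α))
    have hiE : i ∉ E := by
      intro hiE
      have : S i ∈ S '' ↑E := Set.mem_image_of_mem S hiE
      rw [himg, hia] at this
      exact haF (by exact_mod_cast this)
    refine ⟨insert i E, Finset.insert_subset hiX hEX, ?_, ?_, ?_⟩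
    · rw [Finset.coe_insert]
      rw [Set.injOn_insert (by exact_mod_cast hiE)]
      refine ⟨hinj, ?_⟩
      rw [himg, hia]
      exact_mod_cast haF
    · rw [Finset.coe_insert, Set.image_insert_eq, himg, hia, Finset.coe_insert]
    · rw [Finset.card_insert_of_notMem hiE, Finset.card_insert_of_notMem haF]
      omega

lemma rado_flat (M : Matroid α) (S : ι → α) (c : ι → Fin m) (d : ℕ) (X : Finset ι)
    (T : Finset (Fin m)) (hXT : ∀ i ∈ X, c i ∈ T) (hdT : d ≤ T.card)
    (hfib : ∀ j : Fin m, (X.filter (fun i => c i = j)).card ≤ 1) :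
    (∃ E : Finset ι, E ⊆ X ∧ Set.InjOn c ↑E ∧ Set.InjOn S ↑E ∧ E.card + d = T.card ∧
       M.Indep (S '' ↑E)) ∨
    (∃ C : Finset (Fin m), C ⊆ T ∧
       frk M (S '' ↑(X.filter (fun i => c i ∈ C))) + d + 1 ≤ C.card) := by
  classical
  have hXfull : X.filter (fun i => c i ∈ T) = X := Finset.filter_true_of_mem hXT
  by_cases h2 : frk M (S '' ↑(X.filter (fun i => c i ∈ T))) + d + 1 ≤ T.card
  · exact Or.inr ⟨T, Finset.Subset.refl T, h2⟩
  rw [hXfull] at h2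
  left
  obtain ⟨I, hIX, hIind, hIcard⟩ := exists_frk_set M (S '' ↑X)
  have hIfin : I.Finite := (X.finite_toSet.image S).subset hIX
  obtain ⟨E0, hE0X, hE0inj, hE0img, hE0card⟩ :=
    exists_lift S X hIfin.toFinset (by rw [Set.Finite.coe_toFinset]; exact hIX)
  rw [Set.Finite.coe_toFinset] at hE0img
  have hE0card' : E0.card = frk M (S '' ↑X) := by
    rw [hE0card, ← Set.ncard_coe_finset, Set.Finite.coe_toFinset, hIcard]
  have hle : T.card - d ≤ E0.card := by omega
  obtain ⟨E, hEE0, hEcard⟩ := Finset.exists_subset_card_eq hle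
  have hEX : E ⊆ X := hEE0.trans hE0X
  refine ⟨E, hEX, ?_, hE0inj.mono (by exact_mod_cast hEE0), by omega, ?_⟩
  · intro x hx y hy hcxy
    have hx' : x ∈ X.filter (fun i => c i = c y) := by
      rw [Finset.mem_filter]; exact ⟨hEX (by exact_mod_cast hx), hcxy⟩
    have hy' : y ∈ X.filter (fun i => c i = c y) := by
      rw [Finset.mem_filter]; exact ⟨hEX (by exact_mod_cast hy), rfl⟩
    exact Finset.card_le_one.1 (hfib (c y)) _ hx' _ hy'
  · refine hIind.subset ?_
    rw [← hE0img]
    exact Set.image_mono (by exact_mod_cast hEE0)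

lemma rado (M : Matroid α) (S : ι → α) (c : ι → Fin m) (d : ℕ) :
    ∀ (n : ℕ) (X : Finset ι), X.card ≤ n → ∀ (T : Finset (Fin m)),
    (∀ i ∈ X, c i ∈ T) → d ≤ T.card →
    (∃ E : Finset ι, E ⊆ X ∧ Set.InjOn c ↑E ∧ Set.InjOn S ↑E ∧ E.card + d = T.card ∧
       M.Indep (S '' ↑E)) ∨
    (∃ C : Finset (Fin m), C ⊆ T ∧
       frk M (S '' ↑(X.filter (fun i => c i ∈ C))) + d + 1 ≤ C.card) := by
  classical
  intro n
  induction n with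
  | zero =>
    intro X hX T hXT hdT
    have : X = ∅ := Finset.card_eq_zero.1 (Nat.le_zero.1 hX)
    subst this
    exact rado_flat M S c d ∅ T (by simp) hdT (by simp)
  | succ n ih =>
    intro X hX T hXT hdT
    by_cases hfib : ∀ j : Fin m, (X.filter (fun i => c i = j)).card ≤ 1
    · exact rado_flat M S c d X T hXT hdT hfib
    push_neg at hfib
    obtain ⟨j, hj⟩ := hfib
    rw [Nat.lt_iff_add_one_le] at hj
    obtain ⟨x, hx, y, hy, hxy⟩ := Finset.one_lt_card.1 (by omega : 1 < (X.filter (fun i => c i = j)).card)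
    have hcx : c x = j := (Finset.mem_filter.1 hx).2
    have hcy : c y = j := (Finset.mem_filter.1 hy).2
    have hxX : x ∈ X := (Finset.mem_filter.1 hx).1
    have hyX : y ∈ X := (Finset.mem_filter.1 hy).1
    have hcard_erase : ∀ z ∈ X, (X.erase z).card ≤ n := by
      intro z hz
      rw [Finset.card_erase_of_mem hz]
      omega
    have hXTx : ∀ i ∈ X.erase x, c i ∈ T := fun i hi => hXT i (Finset.mem_of_mem_erase hi)
    have hXTy : ∀ i ∈ X.erase y, c i ∈ T := fun i hi => hXT i (Finset.mem_of_mem_erase hi)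
    rcases ih (X.erase x) (hcard_erase x hxX) T hXTx hdT with ⟨E, hE1, hE2, hE3, hE4, hE5⟩ | ⟨Cx, hCxT, hCx⟩
    · exact Or.inl ⟨E, hE1.trans (Finset.erase_subset _ _), hE2, hE3, hE4, hE5⟩
    by_cases hjCx : j ∈ Cx
    swap
    · refine Or.inr ⟨Cx, hCxT, ?_⟩
      have : (X.erase x).filter (fun i => c i ∈ Cx) = X.filter (fun i => c i ∈ Cx) := by
        ext i
        simp only [Finset.mem_filter, Finset.mem_erase]
        constructor
        · rintro ⟨⟨-, hiX⟩, hic⟩; exact ⟨hiX, hic⟩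
        · rintro ⟨hiX, hic⟩
          refine ⟨⟨?_, hiX⟩, hic⟩
          rintro rfl
          rw [hcx] at hic
          exact hjCx hic
      rwa [this] at hCx
    rcases ih (X.erase y) (hcard_erase y hyX) T hXTy hdT with ⟨E, hE1, hE2, hE3, hE4, hE5⟩ | ⟨Cy, hCyT, hCy⟩
    · exact Or.inl ⟨E, hE1.trans (Finset.erase_subset _ _), hE2, hE3, hE4, hE5⟩
    by_cases hjCy : j ∈ Cy
    swap
    · refine Or.inr ⟨Cy, hCyT, ?_⟩
      have : (X.erase y).filter (fun i => c i ∈ Cy) = X.filter (fun i => c i ∈ Cy) := by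
        ext i
        simp only [Finset.mem_filter, Finset.mem_erase]
        constructor
        · rintro ⟨⟨-, hiX⟩, hic⟩; exact ⟨hiX, hic⟩
        · rintro ⟨hiX, hic⟩
          refine ⟨⟨?_, hiX⟩, hic⟩
          rintro rfl
          rw [hcy] at hic
          exact hjCy hic
      rwa [this] at hCy
    -- submodularity combination
    set A := S '' ↑((X.erase x).filter (fun i => c i ∈ Cx)) with hA
    set B := S '' ↑((X.erase y).filter (fun i => c i ∈ Cy)) with hB
    have hAfin : A.Finite := Finset.finite_toSet _ |>.image S
    have hBfin : B.Finite := Finset.finite_toSet _ |>.image S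
    have hUnion : (S '' ↑(X.filter (fun i => c i ∈ Cx ∪ Cy))) ⊆ A ∪ B := by
      rintro - ⟨i, hi, rfl⟩
      have hi' := Finset.mem_filter.1 (by exact_mod_cast hi)
      obtain ⟨hiX, hic⟩ := hi'
      rcases Finset.mem_union.1 hic with h | h
      · by_cases hix : i = x
        · subst hix
          right
          refine Set.mem_image_of_mem S ?_
          exact_mod_cast Finset.mem_filter.2 ⟨Finset.mem_erase.2 ⟨hxy, hiX⟩, by rw [hcx]; exact Finset.mem_union.1 hic |>.elim (fun _ => hjCy) (fun _ => hjCy)⟩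
        · left
          exact Set.mem_image_of_mem S (by exact_mod_cast Finset.mem_filter.2 ⟨Finset.mem_erase.2 ⟨hix, hiX⟩, h⟩)
      · by_cases hiy : i = y
        · subst hiy
          left
          refine Set.mem_image_of_mem S ?_
          exact_mod_cast Finset.mem_filter.2 ⟨Finset.mem_erase.2 ⟨Ne.symm hxy, hiX⟩, by rw [hcy]; exact hjCx⟩
        · right
          exact Set.mem_image_of_mem S (by exact_mod_cast Finset.mem_filter.2 ⟨Finset.mem_erase.2 ⟨hiy, hiX⟩, h⟩)
    have hInter : (S '' ↑(X.filter (fun i => c i ∈ (Cx ∩ Cy).erase j))) ⊆ A ∩ B := by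
      rintro - ⟨i, hi, rfl⟩
      have hi' := Finset.mem_filter.1 (by exact_mod_cast hi)
      obtain ⟨hiX, hic⟩ := hi'
      have hcij : c i ≠ j := (Finset.mem_erase.1 hic).1
      have hicx : c i ∈ Cx := (Finset.mem_inter.1 (Finset.mem_of_mem_erase hic)).1
      have hicy : c i ∈ Cy := (Finset.mem_inter.1 (Finset.mem_of_mem_erase hic)).2
      have hix : i ≠ x := by rintro rfl; exact hcij hcx
      have hiy : i ≠ y := by rintro rfl; exact hcij hcy
      constructor
      · exact Set.mem_image_of_mem S (by exact_mod_cast Finset.mem_filter.2 ⟨Finset.mem_erase.2 ⟨hix, hiX⟩, hicx⟩)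
      · exact Set.mem_image_of_mem S (by exact_mod_cast Finset.mem_filter.2 ⟨Finset.mem_erase.2 ⟨hiy, hiX⟩, hicy⟩)
    have hsub := frk_submod (M := M) A B hAfin hBfin
    have h1 : frk M (S '' ↑(X.filter (fun i => c i ∈ Cx ∪ Cy))) ≤ frk M (A ∪ B) :=
      frk_mono hUnion (hAfin.union hBfin)
    have h2 : frk M (S '' ↑(X.filter (fun i => c i ∈ (Cx ∩ Cy).erase j))) ≤ frk M (A ∩ B) :=
      frk_mono hInter ((hAfin.union hBfin).subset (Set.inter_subset_left.trans Set.subset_union_left))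
    have hcards : (Cx ∪ Cy).card + ((Cx ∩ Cy).erase j).card + 1 = Cx.card + Cy.card := by
      have := Finset.card_union_add_card_inter Cx Cy
      have hjmem : j ∈ Cx ∩ Cy := Finset.mem_inter.2 ⟨hjCx, hjCy⟩
      rw [Finset.card_erase_of_mem hjmem]
      have : 0 < (Cx ∩ Cy).card := Finset.card_pos.2 ⟨j, hjmem⟩
      omega
    by_cases hu : frk M (S '' ↑(X.filter (fun i => c i ∈ Cx ∪ Cy))) + d + 1 ≤ (Cx ∪ Cy).card
    · exact Or.inr ⟨Cx ∪ Cy, Finset.union_subset hCxT hCyT, hu⟩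
    · refine Or.inr ⟨(Cx ∩ Cy).erase j, ((Finset.erase_subset _ _).trans (Finset.inter_subset_left)).trans hCxT, ?_⟩
      omega

end Colored

section Main

variable {ι : Type*} [Fintype ι] [DecidableEq ι] {m : ℕ}

lemma assemble (M : Matroid α) (S : ι → α) (c : ι → Fin m) {r' : ℕ} (hr' : 0 < r')
    (X E : Finset ι) (hEX : E ⊆ X)
    (hcov : (S '' ↑(X \ E) : Set α) ⊆ M.closure (S '' ↑E))
    (hEinj : Set.InjOn c (↑E : Set ι))
    (J' : Fin r' → Finset ι)
    (h1 : ∀ k, J' k ⊆ X \ E)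
    (h2 : ∀ k l, k ≠ l → Disjoint (J' k) (J' l))
    (h3 : ∀ k, Set.InjOn c (↑(J' k) : Set ι))
    (h4 : M.closure ∅ ⊂ M.closure (S '' ↑(J' ⟨0, hr'⟩)))
    (h5 : ∀ k l : Fin r', k ≤ l → M.closure (S '' ↑(J' k)) ⊆ M.closure (S '' ↑(J' l))) :
    ∃ J : Fin (r' + 1) → Finset ι, (∀ k, J k ⊆ X) ∧
      (∀ k l, k ≠ l → Disjoint (J k) (J l)) ∧
      (∀ k, Set.InjOn c (↑(J k) : Set ι)) ∧
      M.closure ∅ ⊂ M.closure (S '' ↑(J ⟨0, Nat.succ_pos r'⟩)) ∧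
      (∀ k l : Fin (r' + 1), k ≤ l →
        M.closure (S '' ↑(J k)) ⊆ M.closure (S '' ↑(J l))) := by
  classical
  have hdisjE : ∀ k, Disjoint (J' k) E := by
    intro k
    rw [Finset.disjoint_left]
    intro i hi
    exact (Finset.mem_sdiff.1 (h1 k hi)).2
  have hsubcl : ∀ k, M.closure (S '' ↑(J' k)) ⊆ M.closure (S '' ↑E) := by
    intro k
    apply M.closure_subset_closure_of_subset_closure
    intro a ha
    apply hcov
    obtain ⟨i, hi, rfl⟩ := ha
    exact Set.mem_image_of_mem S (by exact_mod_cast h1 k (by exact_mod_cast hi))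
  refine ⟨fun k => if h : (k : ℕ) < r' then J' ⟨k, h⟩ else E, ?_, ?_, ?_, ?_, ?_⟩
  · intro k
    by_cases h : (k : ℕ) < r'
    · simp only [dif_pos h]
      exact (h1 _).trans (Finset.sdiff_subset)
    · simp only [dif_neg h]
      exact hEX
  · intro k l hkl
    by_cases hk : (k : ℕ) < r' <;> by_cases hl : (l : ℕ) < r'
    · simp only [dif_pos hk, dif_pos hl]
      apply h2
      intro h
      apply hkl
      have : (k : ℕ) = (l : ℕ) := by
        have := congrArg Fin.val h
        simpa using this
      exact Fin.ext this
    · simp only [dif_pos hk, dif_neg hl]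
      exact hdisjE _
    · simp only [dif_neg hk, dif_pos hl]
      exact (hdisjE _).symm
    · exfalso
      apply hkl
      have hk' : (k : ℕ) = r' := by omega
      have hl' : (l : ℕ) = r' := by omega
      exact Fin.ext (hk'.trans hl'.symm)
  · intro k
    by_cases h : (k : ℕ) < r'
    · simp only [dif_pos h]; exact h3 _
    · simp only [dif_neg h]; exact hEinj
  · have h0 : ((⟨0, Nat.succ_pos r'⟩ : Fin (r' + 1)) : ℕ) < r' := hr'
    simp only [dif_pos h0]
    exact h4
  · intro k l hkl
    by_cases hk : (k : ℕ) < r' <;> by_cases hl : (l : ℕ) < r'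
    · simp only [dif_pos hk, dif_pos hl]
      exact h5 _ _ (by exact hkl)
    · simp only [dif_pos hk, dif_neg hl]
      exact hsubcl _
    · exfalso
      have : (k : ℕ) ≤ (l : ℕ) := hkl
      omega
    · simp only [dif_neg hk, dif_neg hl]
      exact subset_rfl


lemma main (M : Matroid α) (S : ι → α) (c : ι → Fin m)
    (hS : ∀ i, S i ∈ M.E) (hS' : ∀ i, S i ∉ M.closure ∅) :
    ∀ (N r : ℕ) (hr : 0 < r) (T : Finset (Fin m)) (X : Finset ι),
    r * (m + 1) + T.card ≤ N →
    (∀ i ∈ X, c i ∈ T) →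
    ((∃ s ∈ T, r ≤ (X.filter (fun i => c i = s)).card ∧
        (∀ j ∈ T, j ≠ s → r - 1 ≤ (X.filter (fun i => c i = j)).card) ∧
        frk M (S '' ↑X) ≤ T.card) ∨
      (2 ≤ r ∧ (∀ j ∈ T, r - 1 ≤ (X.filter (fun i => c i = j)).card) ∧
        frk M (S '' ↑X) + 1 ≤ T.card)) →
    ∃ J : Fin r → Finset ι, (∀ k, J k ⊆ X) ∧
      (∀ k l, k ≠ l → Disjoint (J k) (J l)) ∧
      (∀ k, Set.InjOn c (↑(J k) : Set ι)) ∧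
      M.closure ∅ ⊂ M.closure (S '' ↑(J ⟨0, hr⟩)) ∧
      (∀ k l : Fin r, k ≤ l → M.closure (S '' ↑(J k)) ⊆ M.closure (S '' ↑(J l))) := by
  classical
  have ground : ∀ X : Finset ι, (S '' ↑X : Set α) ⊆ M.E := by
    intro X a ha
    obtain ⟨i, -, rfl⟩ := ha
    exact hS i
  have imgfin : ∀ X : Finset ι, (S '' ↑X : Set α).Finite := fun X => X.finite_toSet.image S
  intro N
  induction N with
  | zero =>
    intro r hr T X hμ hXT hyp
    exfalso
    have : 0 < r * (m + 1) := Nat.mul_pos hr (Nat.succ_pos m)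
    omega
  | succ N ih =>
    intro r hr T X hμ hXT hyp
    rcases Nat.lt_or_ge r 2 with hr1 | hr2
    · -- r = 1
      have hr1' : r = 1 := by omega
      subst hr1'
      rcases hyp with ⟨s, hsT, hcs, -, -⟩ | ⟨h2, -, -⟩
      swap
      · omega
      obtain ⟨x, hx⟩ := Finset.card_pos.1 (by omega : 0 < (X.filter (fun i => c i = s)).card)
      have hxX : x ∈ X := (Finset.mem_filter.1 hx).1
      refine ⟨fun _ => {x}, fun k => by simpa using hxX, ?_, ?_, ?_, ?_⟩
      · intro k l hkl; exact absurd (Subsingleton.elim k l) hkl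
      · intro k
        exact Set.Subsingleton.injOn (by simp [Set.subsingleton_singleton]) _
      · constructor
        · exact M.closure_subset_closure (Set.empty_subset _)
        · intro hsub
          apply hS' x
          apply hsub
          exact M.mem_closure_of_mem' (by simp) (hS x)
      · intro k l hkl; exact subset_rfl
    · -- r = r' + 1, r' ≥ 1
      obtain ⟨r', rfl⟩ : ∃ r', r = r' + 1 := ⟨r - 1, by omega⟩
      have hr'pos : 0 < r' := by omega
      have hmul : (r' + 1) * (m + 1) = r' * (m + 1) + (m + 1) := by ring
      rcases hyp with ⟨s, hsT, hcs, hco, hrk⟩ | ⟨-, hco, hrk⟩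
      · -- LEFT branch: special colour s
        by_cases hlt : frk M (S '' ↑X) + 1 ≤ T.card
        · -- (a) drop a colour j ≠ s
          have hone : (1 : ℕ) ≤ frk M (S '' ↑X) := by
            obtain ⟨x, hx⟩ := Finset.card_pos.1
              (by omega : 0 < (X.filter (fun i => c i = s)).card)
            have hxX : x ∈ X := (Finset.mem_filter.1 hx).1
            have hsing : M.Indep {S x} := singleton_indep (hS x) (hS' x)
            have := ncard_le_frk hsing
              (Set.singleton_subset_iff.2 (Set.mem_image_of_mem S (by exact_mod_cast hxX)))
              (imgfin X)
            simpa using this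
          have hT2 : 1 < T.card := by omega
          obtain ⟨j, hjT, hjs⟩ := Finset.exists_mem_ne hT2 s
          have hT'card : (T.erase j).card = T.card - 1 := Finset.card_erase_of_mem hjT
          have hXT' : ∀ i ∈ X.filter (fun i => c i ≠ j), c i ∈ T.erase j := by
            intro i hi
            obtain ⟨hiX, hij⟩ := Finset.mem_filter.1 hi
            exact Finset.mem_erase.2 ⟨hij, hXT i hiX⟩
          have hfib' : ∀ j', j' ≠ j →
              (X.filter (fun i => c i ≠ j)).filter (fun i => c i = j') =
              X.filter (fun i => c i = j') := by
            intro j' hj'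
            ext i
            simp only [Finset.mem_filter, Finset.filter_filter]
            constructor
            · rintro ⟨h1, -, h3⟩; exact ⟨h1, h3⟩
            · rintro ⟨h1, h3⟩; exact ⟨h1, by rw [h3]; exact hj', h3⟩
          have hfrk' : frk M (S '' ↑(X.filter (fun i => c i ≠ j))) ≤ (T.erase j).card := by
            have : frk M (S '' ↑(X.filter (fun i => c i ≠ j))) ≤ frk M (S '' ↑X) :=
              frk_mono (Set.image_mono (by exact_mod_cast Finset.filter_subset _ _))
                (imgfin X)
            omega
          have hTpos : 0 < T.card := Finset.card_pos.2 ⟨j, hjT⟩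
          have hmu' : (r' + 1) * (m + 1) + (T.erase j).card ≤ N := by omega
          obtain ⟨J, hJ1, hJ2, hJ3, hJ4, hJ5⟩ := ih (r' + 1) hr (T.erase j)
            (X.filter (fun i => c i ≠ j)) hmu' hXT'
            (Or.inl ⟨s, Finset.mem_erase.2 ⟨Ne.symm hjs, hsT⟩,
              by rw [hfib' s (Ne.symm hjs)]; exact hcs,
              fun j' hj' hjs' => by
                rw [hfib' j' (Finset.mem_erase.1 hj').1]
                exact hco j' (Finset.mem_of_mem_erase hj') hjs',
              hfrk'⟩)
          exact ⟨J, fun k => (hJ1 k).trans (Finset.filter_subset _ _), hJ2, hJ3, hJ4, hJ5⟩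
        · -- (b) frk = T.card ; use rado with d = 0
          have hfrk_eq : frk M (S '' ↑X) = T.card := le_antisymm hrk (by omega)
          rcases rado M S c 0 X.card X le_rfl T hXT (Nat.zero_le _) with
            ⟨E, hEX, hEc, hES, hEcard, hEind⟩ | ⟨C, hCT, hC⟩
          · rw [Nat.add_zero] at hEcard
            have hle : frk M (S '' ↑X) ≤ (S '' ↑E : Set α).ncard := by
              rw [Set.ncard_image_of_injOn hES, Set.ncard_coe_finset, hEcard, hfrk_eq]
            have hcov : (S '' ↑X : Set α) ⊆ M.closure (S '' ↑E) :=
              subset_closure_of_frk_le hEind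
                (Set.image_mono (by exact_mod_cast hEX)) (imgfin X) (ground X) hle
            have hfibX2 : ∀ j', (X.filter (fun i => c i = j')).card - 1 ≤
                ((X \ E).filter (fun i => c i = j')).card := by
              intro j'
              have hEq : (X \ E).filter (fun i => c i = j') =
                  (X.filter (fun i => c i = j')) \ E := by
                ext i
                simp only [Finset.mem_filter, Finset.mem_sdiff]
                tauto
              have hinter : ((X.filter (fun i => c i = j')) ∩ E).card ≤ 1 := by
                apply Finset.card_le_one.2
                intro a ha b hb
                have ha' := Finset.mem_inter.1 ha
                have hb' := Finset.mem_inter.1 hb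
                apply hEc (by exact_mod_cast ha'.2) (by exact_mod_cast hb'.2)
                rw [(Finset.mem_filter.1 ha'.1).2, (Finset.mem_filter.1 hb'.1).2]
              have := Finset.card_sdiff_add_card_inter
                (X.filter (fun i => c i = j')) E
              rw [hEq]
              omega
            have hXT2 : ∀ i ∈ X \ E, c i ∈ T := fun i hi => hXT i (Finset.mem_sdiff.1 hi).1
            have hfrk2 : frk M (S '' ↑(X \ E)) ≤ T.card := by
              have : frk M (S '' ↑(X \ E)) ≤ frk M (S '' ↑X) :=
                frk_mono (Set.image_mono (by exact_mod_cast Finset.sdiff_subset)) (imgfin X)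
              omega
            have hmu' : r' * (m + 1) + T.card ≤ N := by omega
            obtain ⟨J', hJ1, hJ2, hJ3, hJ4, hJ5⟩ := ih r' hr'pos T (X \ E) hmu' hXT2
              (Or.inl ⟨s, hsT, by have := hfibX2 s; omega,
                fun j' hj' hjs' => by
                  have h1 := hfibX2 j'
                  have h2 := hco j' hj' hjs'
                  omega, hfrk2⟩)
            exact assemble M S c hr'pos X E hEX
              (fun a ha => hcov ((Set.image_mono (by exact_mod_cast Finset.sdiff_subset)) ha))
              hEc J' hJ1 hJ2 hJ3 hJ4 hJ5
          · -- recurse into C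
            have hCne : C ≠ T := by
              intro h
              subst h
              rw [Finset.filter_true_of_mem hXT] at hC
              omega
            have hCcard : C.card < T.card :=
              Finset.card_lt_card (Finset.ssubset_iff_subset_ne.2 ⟨hCT, hCne⟩)
            have hXCT : ∀ i ∈ X.filter (fun i => c i ∈ C), c i ∈ C :=
              fun i hi => (Finset.mem_filter.1 hi).2
            have hfibC : ∀ j' ∈ C, (X.filter (fun i => c i ∈ C)).filter (fun i => c i = j') =
                X.filter (fun i => c i = j') := by
              intro j' hj'
              ext i
              simp only [Finset.mem_filter, Finset.filter_filter]
              constructor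
              · rintro ⟨h1, -, h3⟩; exact ⟨h1, h3⟩
              · rintro ⟨h1, h3⟩; exact ⟨h1, by rw [h3]; exact hj', h3⟩
            by_cases hsC : s ∈ C
            · have hmu' : (r' + 1) * (m + 1) + C.card ≤ N := by omega
              obtain ⟨J, hJ1, hJ2, hJ3, hJ4, hJ5⟩ := ih (r' + 1) hr C
                (X.filter (fun i => c i ∈ C)) hmu' hXCT
                (Or.inl ⟨s, hsC, by rw [hfibC s hsC]; exact hcs,
                  fun j' hj' hjs' => by
                    rw [hfibC j' hj']
                    exact hco j' (hCT hj') hjs', by omega⟩)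
              exact ⟨J, fun k => (hJ1 k).trans (Finset.filter_subset _ _), hJ2, hJ3, hJ4, hJ5⟩
            · have hmu' : (r' + 1) * (m + 1) + C.card ≤ N := by omega
              obtain ⟨J, hJ1, hJ2, hJ3, hJ4, hJ5⟩ := ih (r' + 1) hr C
                (X.filter (fun i => c i ∈ C)) hmu' hXCT
                (Or.inr ⟨by omega,
                  fun j' hj' => by
                    rw [hfibC j' hj']
                    exact hco j' (hCT hj') (fun h => hsC (h ▸ hj')), by omega⟩)
              exact ⟨J, fun k => (hJ1 k).trans (Finset.filter_subset _ _), hJ2, hJ3, hJ4, hJ5⟩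
      · -- RIGHT branch: no special colour, spare colour available
        by_cases hlt : frk M (S '' ↑X) + 2 ≤ T.card
        · -- (a') drop any colour
          obtain ⟨j, hjT⟩ := Finset.card_pos.1 (by omega : 0 < T.card)
          have hT'card : (T.erase j).card = T.card - 1 := Finset.card_erase_of_mem hjT
          have hXT' : ∀ i ∈ X.filter (fun i => c i ≠ j), c i ∈ T.erase j := by
            intro i hi
            obtain ⟨hiX, hij⟩ := Finset.mem_filter.1 hi
            exact Finset.mem_erase.2 ⟨hij, hXT i hiX⟩
          have hfib' : ∀ j', j' ≠ j →
              (X.filter (fun i => c i ≠ j)).filter (fun i => c i = j') =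
              X.filter (fun i => c i = j') := by
            intro j' hj'
            ext i
            simp only [Finset.mem_filter, Finset.filter_filter]
            constructor
            · rintro ⟨h1, -, h3⟩; exact ⟨h1, h3⟩
            · rintro ⟨h1, h3⟩; exact ⟨h1, by rw [h3]; exact hj', h3⟩
          have hfrk' : frk M (S '' ↑(X.filter (fun i => c i ≠ j))) + 1 ≤ (T.erase j).card := by
            have : frk M (S '' ↑(X.filter (fun i => c i ≠ j))) ≤ frk M (S '' ↑X) :=
              frk_mono (Set.image_mono (by exact_mod_cast Finset.filter_subset _ _))
                (imgfin X)
            omega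
          have hTpos : 0 < T.card := Finset.card_pos.2 ⟨j, hjT⟩
          have hmu' : (r' + 1) * (m + 1) + (T.erase j).card ≤ N := by omega
          obtain ⟨J, hJ1, hJ2, hJ3, hJ4, hJ5⟩ := ih (r' + 1) hr (T.erase j)
            (X.filter (fun i => c i ≠ j)) hmu' hXT'
            (Or.inr ⟨hr2,
              fun j' hj' => by
                rw [hfib' j' (Finset.mem_erase.1 hj').1]
                exact hco j' (Finset.mem_of_mem_erase hj'), hfrk'⟩)
          exact ⟨J, fun k => (hJ1 k).trans (Finset.filter_subset _ _), hJ2, hJ3, hJ4, hJ5⟩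
        · -- (b') frk + 1 = T.card ; rado with d = 1
          have hfrk_eq : frk M (S '' ↑X) + 1 = T.card := le_antisymm hrk (by omega)
          rcases rado M S c 1 X.card X le_rfl T hXT (by omega) with
            ⟨E, hEX, hEc, hES, hEcard, hEind⟩ | ⟨C, hCT, hC⟩
          · -- spanning partial transversal E, missing colour j₀
            have himg : E.image c ⊆ T := by
              intro j hj
              obtain ⟨i, hi, rfl⟩ := Finset.mem_image.1 hj
              exact hXT i (hEX hi)
            have himgcard : (E.image c).card = E.card :=
              Finset.card_image_of_injOn (by exact_mod_cast hEc)
            have himgne : E.image c ≠ T := by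
              intro h
              rw [← h, himgcard] at hfrk_eq
              omega
            obtain ⟨j₀, hj₀T, hj₀⟩ :=
              Finset.exists_of_ssubset (Finset.ssubset_iff_subset_ne.2 ⟨himg, himgne⟩)
            have hle : frk M (S '' ↑X) ≤ (S '' ↑E : Set α).ncard := by
              rw [Set.ncard_image_of_injOn hES, Set.ncard_coe_finset]
              omega
            have hcov : (S '' ↑X : Set α) ⊆ M.closure (S '' ↑E) :=
              subset_closure_of_frk_le hEind
                (Set.image_mono (by exact_mod_cast hEX)) (imgfin X) (ground X) hle
            have hfibX2 : ∀ j', (X.filter (fun i => c i = j')).card - 1 ≤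
                ((X \ E).filter (fun i => c i = j')).card := by
              intro j'
              have hEq : (X \ E).filter (fun i => c i = j') =
                  (X.filter (fun i => c i = j')) \ E := by
                ext i
                simp only [Finset.mem_filter, Finset.mem_sdiff]
                tauto
              have hinter : ((X.filter (fun i => c i = j')) ∩ E).card ≤ 1 := by
                apply Finset.card_le_one.2
                intro a ha b hb
                have ha' := Finset.mem_inter.1 ha
                have hb' := Finset.mem_inter.1 hb
                apply hEc (by exact_mod_cast ha'.2) (by exact_mod_cast hb'.2)
                rw [(Finset.mem_filter.1 ha'.1).2, (Finset.mem_filter.1 hb'.1).2]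
              have := Finset.card_sdiff_add_card_inter (X.filter (fun i => c i = j')) E
              rw [hEq]
              omega
            have hj₀fib : ((X \ E).filter (fun i => c i = j₀)).card =
                (X.filter (fun i => c i = j₀)).card := by
              have hEq : (X \ E).filter (fun i => c i = j₀) =
                  (X.filter (fun i => c i = j₀)) \ E := by
                ext i
                simp only [Finset.mem_filter, Finset.mem_sdiff]
                tauto
              have hdisj : Disjoint (X.filter (fun i => c i = j₀)) E := by
                rw [Finset.disjoint_left]
                intro i hi hiE
                exact hj₀ (Finset.mem_image.2 ⟨i, hiE, (Finset.mem_filter.1 hi).2⟩)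
              rw [hEq, Finset.sdiff_eq_self_of_disjoint (hdisj.symm).symm]
            have hXT2 : ∀ i ∈ X \ E, c i ∈ T := fun i hi => hXT i (Finset.mem_sdiff.1 hi).1
            have hfrk2 : frk M (S '' ↑(X \ E)) ≤ T.card := by
              have : frk M (S '' ↑(X \ E)) ≤ frk M (S '' ↑X) :=
                frk_mono (Set.image_mono (by exact_mod_cast Finset.sdiff_subset)) (imgfin X)
              omega
            have hmu' : r' * (m + 1) + T.card ≤ N := by omega
            obtain ⟨J', hJ1, hJ2, hJ3, hJ4, hJ5⟩ := ih r' hr'pos T (X \ E) hmu' hXT2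
              (Or.inl ⟨j₀, hj₀T,
                by
                  rw [hj₀fib]
                  have := hco j₀ hj₀T
                  omega,
                fun j' hj' hjs' => by
                  have h1 := hfibX2 j'
                  have h2 := hco j' hj'
                  omega, hfrk2⟩)
            exact assemble M S c hr'pos X E hEX
              (fun a ha => hcov ((Set.image_mono (by exact_mod_cast Finset.sdiff_subset)) ha))
              hEc J' hJ1 hJ2 hJ3 hJ4 hJ5
          · -- recurse into C
            have hCne : C ≠ T := by
              intro h
              subst h
              rw [Finset.filter_true_of_mem hXT] at hC
              omega
            have hCcard : C.card < T.card :=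
              Finset.card_lt_card (Finset.ssubset_iff_subset_ne.2 ⟨hCT, hCne⟩)
            have hXCT : ∀ i ∈ X.filter (fun i => c i ∈ C), c i ∈ C :=
              fun i hi => (Finset.mem_filter.1 hi).2
            have hfibC : ∀ j' ∈ C, (X.filter (fun i => c i ∈ C)).filter (fun i => c i = j') =
                X.filter (fun i => c i = j') := by
              intro j' hj'
              ext i
              simp only [Finset.mem_filter, Finset.filter_filter]
              constructor
              · rintro ⟨h1, -, h3⟩; exact ⟨h1, h3⟩
              · rintro ⟨h1, h3⟩; exact ⟨h1, by rw [h3]; exact hj', h3⟩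
            have hmu' : (r' + 1) * (m + 1) + C.card ≤ N := by omega
            obtain ⟨J, hJ1, hJ2, hJ3, hJ4, hJ5⟩ := ih (r' + 1) hr C
              (X.filter (fun i => c i ∈ C)) hmu' hXCT
              (Or.inr ⟨hr2,
                fun j' hj' => by
                  rw [hfibC j' hj']
                  exact hco j' (hCT hj'), by omega⟩)
            exact ⟨J, fun k => (hJ1 k).trans (Finset.filter_subset _ _), hJ2, hJ3, hJ4, hJ5⟩

end Main

end MatTverberg

open Finset in
/-- Colorful matroidal Tverberg, special version: `m` colors, the first color used at
least `r` times, each other color at least `r - 1` times. -/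
theorem colorful_matroidal_tverberg_special {α ι : Type*} [Fintype ι] [DecidableEq ι]
    (M : Matroid α) (m r : ℕ) (hr : 1 ≤ r) (hm : 0 < m)
    (B : Set α) (hB : M.IsBase B) (hBfin : B.Finite) (hBm : B.ncard = m)
    (S : ι → α) (hS : ∀ i, S i ∈ M.E) (hS' : ∀ i, S i ∉ M.closure ∅)
    (c : ι → Fin m)
    (hc₀ : r ≤ (univ.filter fun i => c i = ⟨0, hm⟩).card)
    (hc : ∀ col : Fin m, col ≠ ⟨0, hm⟩ →
      r - 1 ≤ (univ.filter fun i => c i = col).card) :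
    ∃ J : Fin r → Finset ι,
      (∀ i j, i ≠ j → Disjoint (J i) (J j)) ∧
      (∀ k : Fin r, Set.InjOn c (J k : Set ι)) ∧
      M.closure ∅ ⊂ M.closure (S '' (J ⟨0, hr⟩ : Set ι)) ∧
      (∀ i j : Fin r, i ≤ j →
        M.closure (S '' (J i : Set ι)) ⊆ M.closure (S '' (J j : Set ι))) := by
  classical
  have hground : (S '' ↑(Finset.univ : Finset ι) : Set α) ⊆ M.E := by
    rintro - ⟨i, -, rfl⟩
    exact hS i
  have hfrk : MatTverberg.frk M (S '' ↑(Finset.univ : Finset ι)) ≤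
      (Finset.univ : Finset (Fin m)).card := by
    have h1 := MatTverberg.frk_le_base_ncard (M := M) hB hBfin hground
    rw [hBm] at h1
    simpa [Finset.card_univ] using h1
  obtain ⟨J, hJ0, hJ2, hJ3, hJ4, hJ5⟩ := MatTverberg.main M S c hS hS'
    (r * (m + 1) + m) r hr Finset.univ Finset.univ
    (by simp [Finset.card_univ]) (fun i _ => Finset.mem_univ _)
    (Or.inl ⟨⟨0, hm⟩, Finset.mem_univ _, hc₀, fun j _ hj => hc j hj, hfrk⟩)
  exact ⟨J, hJ2, hJ3, hJ4, hJ5⟩
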